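/- Fix reals c₁ ≥ c₂ ≥ ... ≥ c_m ≥ 0 and probabilities p₁, ..., p_m ∈ [0,1] with Σ_s p_s ≥ 1. Let b = min{a : Σ_{s=1}^a p_s ≥ 1} and B̄ = c_b. Define f(B) = B + Σ_{s=1}^m p_s · (c_s - B)⁺. Then for every ε > 0, f(B̄ + ε) > f(B̄). -/
import Mathlib


theorem truncation_threshold_increase_strict {m : ℕ} (p c : Fin m → ℝ) (b : Fin m)
    (hp0 : ∀ s, 0 ≤ p s) (hp1 : ∀ s, p s ≤ 1)
    (hc : ∀ s t : Fin m, s ≤ t → c t ≤ c s) (hc0 : ∀ s, 0 ≤ c s)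
    (hb : 1 ≤ ∑ s ∈ Finset.univ.filter (fun s => s ≤ b), p s)
    (hbmin : ∀ a : Fin m, a < b →
      ∑ s ∈ Finset.univ.filter (fun s => s ≤ a), p s < 1)
    (ε : ℝ) (hε : 0 < ε) :
    (c b) + ∑ s, p s * max (c s - c b) 0 <
      (c b + ε) + ∑ s, p s * max (c s - (c b + ε)) 0 := by
  set B := c b with hB
  -- sum over strictly-larger costs is < 1
  have hsub : Finset.univ.filter (fun s => B < c s) ⊆
      Finset.univ.filter (fun s => s < b) := by
    intro s hs
    simp only [Finset.mem_filter, Finset.mem_univ, true_and] at hs ⊢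
    by_contra h
    exact absurd (hc b s (le_of_not_gt h)) (not_le.mpr hs)
  have hltb : ∑ s ∈ Finset.univ.filter (fun s => s < b), p s < 1 := by
    rcases Nat.eq_zero_or_pos b.val with h0 | h0
    · have : Finset.univ.filter (fun s : Fin m => s < b) = ∅ := by
        apply Finset.filter_eq_empty_iff.mpr
        intro s _
        simp only [not_lt]
        exact Fin.le_def.mpr (by omega)
      rw [this]; simp
    · have hbm : b.val - 1 < m := by omega
      have ha := hbmin ⟨b.val - 1, hbm⟩ (Fin.lt_def.mpr (by simp; omega))
      have : Finset.univ.filter (fun s : Fin m => s < b) =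
          Finset.univ.filter (fun s : Fin m => s ≤ (⟨b.val - 1, hbm⟩ : Fin m)) := by
        apply Finset.filter_congr
        intro s _
        simp only [Fin.lt_def, Fin.le_def]
        omega
      rw [this]; exact ha
  have hS : ∑ s ∈ Finset.univ.filter (fun s => B < c s), p s < 1 :=
    lt_of_le_of_lt (Finset.sum_le_sum_of_subset_of_nonneg hsub
      (fun s _ _ => hp0 s)) hltb
  -- termwise bound
  have key : ∀ s ∈ Finset.univ, p s * max (c s - B) 0 -
      ε * (if B < c s then p s else 0) ≤ p s * max (c s - (B + ε)) 0 := by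
    intro s _
    by_cases h : B < c s
    · simp only [if_pos h]
      have h1 : max (c s - B) 0 = c s - B := max_eq_left (by linarith)
      have h2 : c s - (B + ε) ≤ max (c s - (B + ε)) 0 := le_max_left _ _
      nlinarith [hp0 s, mul_le_mul_of_nonneg_left h2 (hp0 s)]
    · simp only [if_neg h]
      push_neg at h
      have h1 : max (c s - B) 0 = 0 := max_eq_right (by linarith)
      have h2 : max (c s - (B + ε)) 0 = 0 := max_eq_right (by linarith)
      rw [h1, h2]; simp
  have hsum := Finset.sum_le_sum key
  rw [Finset.sum_sub_distrib, ← Finset.mul_sum] at hsum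
  have hite : ∑ s, (if B < c s then p s else 0) =
      ∑ s ∈ Finset.univ.filter (fun s => B < c s), p s := by
    rw [Finset.sum_filter]
  rw [hite] at hsum
  have : ε * ∑ s ∈ Finset.univ.filter (fun s => B < c s), p s < ε * 1 :=
    mul_lt_mul_of_pos_left hS hε
  linarith
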